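/- Chen decomposition of simplex integrals: let E be a complex Banach space, n ≥ 1, g : ℝ^n → E continuous, and s ≤ u ≤ t real numbers. Then I^n_{s,t}(g) = Σ_{p=0}^{n} I^p_{u,t}((t_1,…,t_p) ↦ I^{n−p}_{s,u}((t_{p+1},…,t_n) ↦ g(t_1,…,t_n))). -/

import Mathlib

/-- The iterated integral `I^n_{s,t}(g) = ∫_{Δ^n_{s,t}} g(t_1,…,t_n) dt_1⋯dt_n` over the
simplex `Δ^n_{s,t} = {s < t_n < ⋯ < t_1 < t}`, written as a nested Bochner integral
`∫_s^t ∫_s^{t_1} ⋯ ∫_s^{t_{n−1}} g(t_1,…,t_n) dt_n ⋯ dt_1`.  By convention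
`I^0_{s,t}(g) = g` (the value of the constant `g`). -/
noncomputable def simplexIntegral {E : Type*} [NormedAddCommGroup E] [NormedSpace ℝ E] :
    (n : ℕ) → ℝ → ℝ → ((Fin n → ℝ) → E) → E
  | 0, _, _, g => g Fin.elim0
  | n + 1, s, t, g => ∫ r in s..t, simplexIntegral n s r (fun ts => g (Fin.cons r ts))

section Aux

variable {E : Type*} [NormedAddCommGroup E] [NormedSpace ℝ E]

private lemma continuous_finCons (n : ℕ) :
    Continuous (fun p : ℝ × (Fin n → ℝ) => (Fin.cons p.1 p.2 : Fin (n + 1) → ℝ)) := by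
  refine continuous_pi fun i => ?_
  refine Fin.cases ?_ (fun j => ?_) i
  · simpa using continuous_fst
  · simpa [Function.comp_def] using (continuous_apply j).comp continuous_snd

private lemma continuous_finAppend {X : Type} [TopologicalSpace X] {p q : ℕ}
    (a : X → Fin p → ℝ) (b : X → Fin q → ℝ) (ha : Continuous a) (hb : Continuous b) :
    Continuous (fun x => (Fin.append (a x) (b x) : Fin (p + q) → ℝ)) := by
  refine continuous_pi fun j => ?_
  induction j using Fin.addCases with
  | left jl => simpa [Fin.append_left, Function.comp_def] using (continuous_apply jl).comp ha
  | right jr => simpa [Fin.append_right, Function.comp_def] using (continuous_apply jr).comp hb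

private lemma simplexIntegral_continuous :
    ∀ (n : ℕ) {X : Type} [TopologicalSpace X] (G : X → (Fin n → ℝ) → E),
    Continuous (fun q : X × (Fin n → ℝ) => G q.1 q.2) →
    ∀ (a b : X → ℝ), Continuous a → Continuous b →
    Continuous fun x => simplexIntegral n (a x) (b x) (G x)
  | 0, X, _, G, hG, a, b, ha, hb => by
      simpa [simplexIntegral, Function.comp_def] using
        hG.comp (continuous_id.prodMk (continuous_const (y := (Fin.elim0 : Fin 0 → ℝ))))
  | (n + 1), X, _, G, hG, a, b, ha, hb => by
      have hF : Continuous (fun q : X × ℝ =>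
          simplexIntegral n (a q.1) q.2 (fun ts => G q.1 (Fin.cons q.2 ts))) := by
        refine simplexIntegral_continuous n (fun (q : X × ℝ) ts => G q.1 (Fin.cons q.2 ts)) ?_
          (fun (q : X × ℝ) => a q.1) (fun (q : X × ℝ) => q.2) ha.fst' continuous_snd
        exact hG.comp ((continuous_fst.comp continuous_fst).prodMk
          ((continuous_finCons n).comp
            ((continuous_snd.comp continuous_fst).prodMk continuous_snd)))
      have key : ∀ x : X, simplexIntegral (n + 1) (a x) (b x) (G x)
          = (∫ r in (0:ℝ)..(b x),
              simplexIntegral n (a x) r (fun ts => G x (Fin.cons r ts)))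
            - ∫ r in (0:ℝ)..(a x),
              simplexIntegral n (a x) r (fun ts => G x (Fin.cons r ts)) := by
        intro x
        have hcont : Continuous fun r : ℝ =>
            simplexIntegral n (a x) r (fun ts => G x (Fin.cons r ts)) :=
          hF.comp (continuous_const.prodMk continuous_id)
        exact (intervalIntegral.integral_interval_sub_left
          (hcont.intervalIntegrable _ _) (hcont.intervalIntegrable _ _)).symm
      simp only [key]
      have c1 : Continuous fun x : X => ∫ r in (0:ℝ)..(b x),
          simplexIntegral n (a x) r (fun ts => G x (Fin.cons r ts)) :=
        intervalIntegral.continuous_parametric_intervalIntegral_of_continuous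
          (f := fun x r => simplexIntegral n (a x) r (fun ts => G x (Fin.cons r ts))) hF hb
      have c2 : Continuous fun x : X => ∫ r in (0:ℝ)..(a x),
          simplexIntegral n (a x) r (fun ts => G x (Fin.cons r ts)) :=
        intervalIntegral.continuous_parametric_intervalIntegral_of_continuous
          (f := fun x r => simplexIntegral n (a x) r (fun ts => G x (Fin.cons r ts))) hF ha
      exact c1.sub c2

private lemma simplexIntegral_cast {m m' : ℕ} (h : m = m') (s t : ℝ)
    (f : (Fin m' → ℝ) → E) :
    simplexIntegral m' s t f = simplexIntegral m s t (fun ws => f (ws ∘ Fin.cast h.symm)) := by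
  subst h; rfl

private lemma cons_comp_cast {α : Type*} {m m' : ℕ} (h : m = m') (h' : m + 1 = m' + 1) (x : α)
    (f : Fin m' → α) (i : Fin (m + 1)) :
    (Fin.cons x (fun j => f (Fin.cast h j)) : Fin (m + 1) → α) i
      = (Fin.cons x f : Fin (m' + 1) → α) (Fin.cast h' i) := by
  subst h; rfl

private lemma fin_key {α : Type*} {p n : ℕ} (r : α) (a : Fin p → α) (b : Fin (n - p) → α)
    (h1 : n = p + (n - p)) (h2 : n + 1 = (p + 1) + (n + 1 - (p + 1)))
    (e : n + 1 - (p + 1) = n - p) :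
    (Fin.cons r (fun j => Fin.append a b (Fin.cast h1 j)) : Fin (n + 1) → α)
      = fun i => Fin.append (Fin.cons r a) (b ∘ Fin.cast e) (Fin.cast h2 i) := by
  funext i
  simp only [Fin.append_cast_right, Fin.append_cons, Function.comp_apply, Fin.cast_cast]
  exact cons_comp_cast _ _ r (Fin.append a b) i

variable [CompleteSpace E]

private lemma chen_aux :
    ∀ (n : ℕ) (g : (Fin n → ℝ) → E), Continuous g → ∀ s u t : ℝ, s ≤ u → u ≤ t →
    simplexIntegral n s t g =
      ∑ p : Fin (n + 1),
        simplexIntegral (p : ℕ) u t (fun ts =>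
          simplexIntegral (n - (p : ℕ)) s u (fun ws =>
            g (fun i => Fin.append ts ws
              (Fin.cast (Nat.add_sub_cancel' (Nat.lt_succ_iff.mp p.isLt)).symm i))))
  | 0, g, hg, s, u, t, hsu, hut => by
      rw [Fin.sum_univ_one]
      exact congrArg g (funext fun i => i.elim0)
  | (n + 1), g, hg, s, u, t, hsu, hut => by
      have hst : s ≤ t := hsu.trans hut
      -- the inner slice function
      set A : ℝ → E := fun r => simplexIntegral n s r (fun ts => g (Fin.cons r ts)) with hA
      have hAc : Continuous A := by
        refine simplexIntegral_continuous n (fun (r : ℝ) ts => g (Fin.cons r ts))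
          (hg.comp (continuous_finCons n)) (fun _ => s) id continuous_const continuous_id
      have h1 : IntervalIntegrable A MeasureTheory.volume s u := hAc.intervalIntegrable _ _
      have h2 : IntervalIntegrable A MeasureTheory.volume u t := hAc.intervalIntegrable _ _
      have hsplit : simplexIntegral (n + 1) s t g = (∫ r in s..u, A r) + ∫ r in u..t, A r :=
        (intervalIntegral.integral_add_adjacent_intervals h1 h2).symm
      rw [hsplit]
      -- rewrite `A r` on `[u, t]` via the induction hypothesis
      have hAeq : Set.EqOn A (fun r => ∑ p : Fin (n + 1),
          simplexIntegral (p : ℕ) u r (fun ts =>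
            simplexIntegral (n - (p : ℕ)) s u (fun ws =>
              g (Fin.cons r (fun i => Fin.append ts ws
                (Fin.cast (Nat.add_sub_cancel' (Nat.lt_succ_iff.mp p.isLt)).symm i))))))
          (Set.uIcc u t) := by
        intro r hr
        rw [Set.uIcc_of_le hut] at hr
        exact chen_aux n (fun ts => g (Fin.cons r ts))
          (hg.comp ((continuous_finCons n).comp (continuous_const.prodMk continuous_id)))
          s u r hsu hr.1
      have hfc : ∀ p : Fin (n + 1), Continuous fun r : ℝ =>
          simplexIntegral (p : ℕ) u r (fun ts =>
            simplexIntegral (n - (p : ℕ)) s u (fun ws =>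
              g (Fin.cons r (fun i => Fin.append ts ws
                (Fin.cast (Nat.add_sub_cancel' (Nat.lt_succ_iff.mp p.isLt)).symm i))))) := by
        intro p
        refine simplexIntegral_continuous (p : ℕ)
          (G := fun (r : ℝ) ts => simplexIntegral (n - (p : ℕ)) s u (fun ws =>
            g (Fin.cons r (fun i => Fin.append ts ws
              (Fin.cast (Nat.add_sub_cancel' (Nat.lt_succ_iff.mp p.isLt)).symm i)))))
          ?_ (fun _ => u) id continuous_const continuous_id
        refine simplexIntegral_continuous (n - (p : ℕ))
          (G := fun (q : ℝ × (Fin (p : ℕ) → ℝ)) ws =>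
            g (Fin.cons q.1 (fun i => Fin.append q.2 ws
              (Fin.cast (Nat.add_sub_cancel' (Nat.lt_succ_iff.mp p.isLt)).symm i))))
          ?_ (fun _ => s) (fun _ => u) continuous_const continuous_const
        have happ : Continuous fun z : (ℝ × (Fin (p : ℕ) → ℝ)) × (Fin (n - (p : ℕ)) → ℝ) =>
            Fin.append z.1.2 z.2 :=
          continuous_finAppend (fun z : (ℝ × (Fin (p : ℕ) → ℝ)) × (Fin (n - (p : ℕ)) → ℝ) => z.1.2)
              (fun z : (ℝ × (Fin (p : ℕ) → ℝ)) × (Fin (n - (p : ℕ)) → ℝ) => z.2)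
            (continuous_snd.comp continuous_fst) continuous_snd
        exact hg.comp ((continuous_finCons n).comp
          ((continuous_fst.comp continuous_fst).prodMk
            (continuous_pi fun i => (continuous_apply _).comp happ)))
      have hterm0 : (∫ r in s..u, A r) = simplexIntegral ((0 : Fin (n + 2)) : ℕ) u t
          (fun ts => simplexIntegral ((n + 1) - ((0 : Fin (n + 2)) : ℕ)) s u (fun ws =>
            g (fun i => Fin.append ts ws
              (Fin.cast (Nat.add_sub_cancel'
                (Nat.lt_succ_iff.mp (0 : Fin (n + 2)).isLt)).symm i)))) := by
        rw [hA]
        show simplexIntegral (n + 1) s u g = simplexIntegral (n + 1) s u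
          (fun ws => g (fun i => Fin.append Fin.elim0 ws
            (Fin.cast (Nat.add_sub_cancel'
              (Nat.lt_succ_iff.mp (0 : Fin (n + 2)).isLt)).symm i)))
        congr 1
        funext ws
        congr 1
        funext i
        simp [Fin.elim0_append, Fin.cast_cast]
        rfl
      have hstep : ∀ p : Fin (n + 1),
          (∫ r in u..t, simplexIntegral (p : ℕ) u r (fun ts =>
            simplexIntegral (n - (p : ℕ)) s u (fun ws =>
              g (Fin.cons r (fun i => Fin.append ts ws
                (Fin.cast (Nat.add_sub_cancel' (Nat.lt_succ_iff.mp p.isLt)).symm i))))))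
          = simplexIntegral (((p.succ : Fin (n + 2))) : ℕ) u t (fun ts =>
              simplexIntegral ((n + 1) - (((p.succ : Fin (n + 2))) : ℕ)) s u (fun ws =>
                g (fun i => Fin.append ts ws
                  (Fin.cast (Nat.add_sub_cancel'
                    (Nat.lt_succ_iff.mp (p.succ : Fin (n + 2)).isLt)).symm i)))) := by
        intro p
        have hsub : n - (p : ℕ) = (n + 1) - ((p : ℕ) + 1) := (Nat.succ_sub_succ n p).symm
        have hBig : ∀ (r : ℝ) (ts : Fin (p : ℕ) → ℝ),
            simplexIntegral ((n + 1) - ((p : ℕ) + 1)) s u (fun ws =>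
              g (fun i => Fin.append (Fin.cons r ts) ws
                (Fin.cast (Nat.add_sub_cancel'
                  (Nat.lt_succ_iff.mp (p.succ : Fin (n + 2)).isLt)).symm i)))
            = simplexIntegral (n - (p : ℕ)) s u (fun ws =>
                g (Fin.cons r (fun i => Fin.append ts ws
                  (Fin.cast (Nat.add_sub_cancel' (Nat.lt_succ_iff.mp p.isLt)).symm i)))) := by
          intro r ts
          rw [simplexIntegral_cast hsub s u]
          congr 1
          funext ws
          congr 1
          exact (fin_key r ts ws
            (Nat.add_sub_cancel' (Nat.lt_succ_iff.mp p.isLt)).symm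
            (Nat.add_sub_cancel' (Nat.lt_succ_iff.mp (p.succ : Fin (n + 2)).isLt)).symm
            hsub.symm).symm
        show _ = ∫ r in u..t, simplexIntegral (p : ℕ) u r (fun ts =>
          simplexIntegral ((n + 1) - ((p : ℕ) + 1)) s u (fun ws =>
            g (fun i => Fin.append (Fin.cons r ts) ws
              (Fin.cast (Nat.add_sub_cancel'
                (Nat.lt_succ_iff.mp (p.succ : Fin (n + 2)).isLt)).symm i))))
        simp only [hBig]
      rw [intervalIntegral.integral_congr hAeq,
        intervalIntegral.integral_finset_sum
          (fun p _ => ((hfc p).intervalIntegrable u t))]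
      conv_rhs => rw [Fin.sum_univ_succ]
      rw [hterm0]
      congr 1
      exact Finset.sum_congr rfl fun p _ => hstep p

end Aux

/-- Chen decomposition of simplex integrals: for a complex Banach space
`E`, `n ≥ 1`, a continuous `g : ℝ^n → E` and `s ≤ u ≤ t`,
`I^n_{s,t}(g) = Σ_{p=0}^{n} I^p_{u,t}((t_1,…,t_p) ↦
  I^{n−p}_{s,u}((t_{p+1},…,t_n) ↦ g(t_1,…,t_n)))`. -/
theorem simplexIntegral_chen {E : Type*} [NormedAddCommGroup E] [NormedSpace ℂ E]
    [CompleteSpace E] (n : ℕ) (hn : 1 ≤ n) (g : (Fin n → ℝ) → E) (hg : Continuous g)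
    (s u t : ℝ) (hsu : s ≤ u) (hut : u ≤ t) :
    simplexIntegral n s t g =
      ∑ p : Fin (n + 1),
        simplexIntegral (p : ℕ) u t (fun ts =>
          simplexIntegral (n - (p : ℕ)) s u (fun ws =>
            g (fun i => Fin.append ts ws
              (Fin.cast (Nat.add_sub_cancel' (Nat.lt_succ_iff.mp p.isLt)).symm i)))) :=
  chen_aux n g hg s u t hsu hut
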